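/- For any graph G with n vertices and m edges, the Ramsey number r(G) satisfies r(G) > 2^(m/n - 1). -/

import Mathlib

open Finset in
lemma stmt0_count (n m N : ℕ) (G : SimpleGraph (Fin n)) [DecidableRel G.Adj]
    (hm : G.edgeFinset.card = m)
    (hRamsey : ∀ χ : Fin N → Fin N → Bool, (∀ a b, χ a b = χ b a) →
      ∃ (f : Fin n ↪ Fin N) (c : Bool), ∀ u v : Fin n, G.Adj u v → χ (f u) (f v) = c) :
    2 ^ m ≤ 2 * N ^ n := by
  classical
  set S : ℕ := Fintype.card (Sym2 (Fin N)) with hS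
  -- every coloring of Sym2 (Fin N) has a monochromatic copy
  have key : ∀ g : Sym2 (Fin N) → Bool, ∃ p : (Fin n ↪ Fin N) × Bool,
      ∀ e ∈ G.edgeFinset, g (e.map p.1) = p.2 := by
    intro g
    obtain ⟨f, c, hfc⟩ := hRamsey (fun a b => g s(a, b))
      (fun a b => by simp [Sym2.eq_swap])
    refine ⟨(f, c), ?_⟩
    intro e he
    induction e with
    | _ u v =>
      rw [SimpleGraph.mem_edgeFinset, SimpleGraph.mem_edgeSet] at he
      simpa using hfc u v he
  have hsub : (Finset.univ : Finset (Sym2 (Fin N) → Bool)) ⊆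
      Finset.univ.biUnion (fun p : (Fin n ↪ Fin N) × Bool =>
        Finset.univ.filter (fun g : Sym2 (Fin N) → Bool =>
          ∀ e ∈ G.edgeFinset, g (e.map p.1) = p.2)) := by
    intro g _
    obtain ⟨p, hp⟩ := key g
    exact Finset.mem_biUnion.2 ⟨p, Finset.mem_univ _,
      Finset.mem_filter.2 ⟨Finset.mem_univ _, hp⟩⟩
  -- each filter set has at most 2 ^ (S - m) elements
  have hbound : ∀ p : (Fin n ↪ Fin N) × Bool,
      (Finset.univ.filter (fun g : Sym2 (Fin N) → Bool =>
        ∀ e ∈ G.edgeFinset, g (e.map p.1) = p.2)).card ≤ 2 ^ (S - m) := by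
    rintro ⟨f, c⟩
    set T : Finset (Sym2 (Fin N)) := G.edgeFinset.image (Sym2.map f) with hT
    have hTcard : T.card = m := by
      rw [hT, Finset.card_image_of_injective _ (Sym2.map.injective f.injective), hm]
    have : (Finset.univ.filter (fun g : Sym2 (Fin N) → Bool =>
        ∀ e ∈ G.edgeFinset, g (e.map f) = c)).card ≤
        Fintype.card ((Tᶜ : Finset (Sym2 (Fin N))) → Bool) := by
      rw [← Finset.card_univ]
      apply Finset.card_le_card_of_injOn (fun g (x : (Tᶜ : Finset (Sym2 (Fin N)))) => g x.1)
      · intro g _; exact Finset.mem_univ _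
      · intro g₁ hg₁ g₂ hg₂ h
        rw [Finset.mem_coe, Finset.mem_filter] at hg₁ hg₂
        funext e
        by_cases he : e ∈ T
        · rw [hT, Finset.mem_image] at he
          obtain ⟨e', he', rfl⟩ := he
          rw [hg₁.2 e' he', hg₂.2 e' he']
        · exact congrFun h ⟨e, Finset.mem_compl.2 he⟩
    calc (Finset.univ.filter (fun g : Sym2 (Fin N) → Bool =>
        ∀ e ∈ G.edgeFinset, g (e.map f) = c)).card
        ≤ Fintype.card ((Tᶜ : Finset (Sym2 (Fin N))) → Bool) := this
      _ = 2 ^ (S - m) := by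
          rw [Fintype.card_fun, Fintype.card_bool, Fintype.card_coe, Finset.card_compl, hTcard]
  obtain ⟨f0, -, -⟩ := hRamsey (fun _ _ => true) (fun _ _ => rfl)
  have hm_le_S : m ≤ S := by
    have h := Finset.card_le_univ (G.edgeFinset.image (Sym2.map f0))
    rw [Finset.card_image_of_injective _ (Sym2.map.injective f0.injective), hm] at h
    rw [hS]
    exact h
  have htotal : 2 ^ S ≤ Fintype.card ((Fin n ↪ Fin N) × Bool) * 2 ^ (S - m) := by
    have h1 : (Finset.univ : Finset (Sym2 (Fin N) → Bool)).card ≤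
        ∑ p : (Fin n ↪ Fin N) × Bool, (Finset.univ.filter (fun g : Sym2 (Fin N) → Bool =>
          ∀ e ∈ G.edgeFinset, g (e.map p.1) = p.2)).card :=
      (Finset.card_le_card hsub).trans Finset.card_biUnion_le
    have h2 : (Finset.univ : Finset (Sym2 (Fin N) → Bool)).card = 2 ^ S := by
      simp [Finset.card_univ, Fintype.card_fun, hS]
    calc 2 ^ S = (Finset.univ : Finset (Sym2 (Fin N) → Bool)).card := h2.symm
      _ ≤ ∑ p : (Fin n ↪ Fin N) × Bool, _ := h1
      _ ≤ ∑ _p : (Fin n ↪ Fin N) × Bool, 2 ^ (S - m) :=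
          Finset.sum_le_sum fun p _ => hbound p
      _ = Fintype.card ((Fin n ↪ Fin N) × Bool) * 2 ^ (S - m) := by
          simp [Finset.sum_const, Finset.card_univ, mul_comm]
  have hcardemb : Fintype.card ((Fin n ↪ Fin N) × Bool) ≤ 2 * N ^ n := by
    rw [Fintype.card_prod, Fintype.card_bool]
    rw [Fintype.card_embedding_eq, Fintype.card_fin, Fintype.card_fin]
    calc N.descFactorial n * 2 ≤ N ^ n * 2 := by
          exact Nat.mul_le_mul_right _ (Nat.descFactorial_le_pow _ _)
      _ = 2 * N ^ n := mul_comm _ _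
  have h2m : 2 ^ m * 2 ^ (S - m) ≤ (2 * N ^ n) * 2 ^ (S - m) := by
    calc 2 ^ m * 2 ^ (S - m) = 2 ^ S := by
          rw [← pow_add, Nat.add_sub_cancel' hm_le_S]
      _ ≤ Fintype.card ((Fin n ↪ Fin N) × Bool) * 2 ^ (S - m) := htotal
      _ ≤ (2 * N ^ n) * 2 ^ (S - m) := Nat.mul_le_mul_right _ hcardemb
  exact Nat.le_of_mul_le_mul_right h2m (pow_pos (by norm_num) _)

theorem stmt0 (n m N : ℕ) (hn : 0 < n) (G : SimpleGraph (Fin n)) [DecidableRel G.Adj]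
    (hm : G.edgeFinset.card = m)
    (hRamsey : ∀ χ : Fin N → Fin N → Bool, (∀ a b, χ a b = χ b a) →
      ∃ (f : Fin n ↪ Fin N) (c : Bool), ∀ u v : Fin n, G.Adj u v → χ (f u) (f v) = c) :
    (N : ℝ) > 2 ^ ((m : ℝ) / n - 1) := by
  classical
  obtain ⟨f0, -, -⟩ := hRamsey (fun _ _ => true) (fun _ _ => rfl)
  have hNn : n ≤ N := by
    simpa using Fintype.card_le_of_embedding f0
  have hN1 : 1 ≤ N := hn.trans_le hNn
  have hcount := stmt0_count n m N G hm hRamsey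
  rcases Nat.lt_or_ge n 2 with h1 | h2
  · -- n = 1, so m = 0
    have hn1 : n = 1 := by omega
    have hm0 : m = 0 := by
      rw [← hm, Finset.card_eq_zero, Finset.eq_empty_iff_forall_notMem]
      intro e he
      rw [SimpleGraph.mem_edgeFinset] at he
      induction e with
      | _ u v =>
        rw [SimpleGraph.mem_edgeSet] at he
        subst hn1
        exact G.ne_of_adj he (Subsingleton.elim u v)
    have heq : ((m : ℝ) / n - 1) = (-1 : ℝ) := by rw [hm0, hn1]; norm_num
    rw [heq, Real.rpow_neg_one]
    have hN : (1 : ℝ) ≤ N := by exact_mod_cast hN1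
    calc (2 : ℝ)⁻¹ < 1 := by norm_num
      _ ≤ N := hN
  · -- n ≥ 2
    have hNpos : (0 : ℝ) < N := by exact_mod_cast hN1
    have hnpos : (0 : ℝ) < n := by exact_mod_cast hn
    have hc : (2 : ℝ) ^ ((m : ℝ) - 1) ≤ (N : ℝ) ^ (n : ℝ) := by
      rw [Real.rpow_natCast, Real.rpow_sub (by norm_num : (0:ℝ) < 2), Real.rpow_one,
        Real.rpow_natCast, div_le_iff₀ (by norm_num : (0:ℝ) < 2)]
      calc (2 : ℝ) ^ m ≤ 2 * (N : ℝ) ^ n := by exact_mod_cast hcount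
        _ = (N : ℝ) ^ n * 2 := mul_comm _ _
    have h3 : ((2 : ℝ) ^ ((m : ℝ) - 1)) ^ ((n : ℝ)⁻¹) ≤ ((N : ℝ) ^ (n : ℝ)) ^ ((n : ℝ)⁻¹) :=
      Real.rpow_le_rpow (Real.rpow_nonneg (by norm_num) _) hc (by positivity)
    rw [← Real.rpow_mul (by norm_num : (0:ℝ) ≤ 2), ← Real.rpow_mul hNpos.le,
      mul_inv_cancel₀ (ne_of_gt hnpos), Real.rpow_one] at h3
    have h4 : (2 : ℝ) ^ ((m : ℝ) / n - 1) < 2 ^ (((m : ℝ) - 1) * (n : ℝ)⁻¹) := by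
      apply (Real.rpow_lt_rpow_left_iff (by norm_num : (1:ℝ) < 2)).2
      have h2' : (1 : ℝ) < n := by exact_mod_cast h2
      have hinv : (n : ℝ)⁻¹ < 1 := by
        rw [inv_lt_one_iff₀]; right; exact h2'
      rw [sub_mul, div_eq_mul_inv, one_mul]
      linarith
    exact lt_of_lt_of_le h4 h3
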